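/- Let G be a group, N a normal subgroup, and M a G-module (abelian group with G-action) such that the subgroup of N-fixed points of M is trivial. Then the restriction map from H^1(G, M) to H^1(N, M) is injective, and its image is contained in the G/N-invariant classes; moreover restriction gives an isomorphism from H^1(G, M) onto the G/N-invariant subgroup of H^1(N, M). -/
import Mathlib


/-- A 1-cocycle of a group `G` with values in a `G`-module `M`. -/
def IsOneCocycle {G M : Type*} [Group G] [AddCommGroup M] [DistribMulAction G M]
    (f : G → M) : Prop :=
  ∀ g h : G, f (g * h) = f g + g • f h

/-- if `M^N = 0` then restriction `H¹(G,M) → H¹(N,M)` is injective, lands in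
the `G/N`-invariant classes (invariance under conjugation by every `σ ∈ G`), and is
surjective onto the `G/N`-invariant classes. -/
theorem restriction_H1_iso_of_fixedPoints_trivial
    {G M : Type*} [Group G] [AddCommGroup M] [DistribMulAction G M]
    (N : Subgroup G) (hN : N.Normal)
    (hfix : ∀ m : M, (∀ n ∈ N, n • m = m) → m = 0) :
    -- injectivity: two cocycles on `G` whose restrictions to `N` are cohomologous over `N`
    -- are cohomologous over `G`
    (∀ f f' : G → M, IsOneCocycle f → IsOneCocycle f' →
      (∃ m : M, ∀ n ∈ N, f n - f' n = n • m - m) →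
      (∃ m : M, ∀ g : G, f g - f' g = g • m - m)) ∧
    -- the image lies in the `G/N`-invariants: for every `σ ∈ G` the conjugated restricted
    -- cocycle is cohomologous (over `N`) to the restricted cocycle
    (∀ f : G → M, IsOneCocycle f → ∀ σ : G,
      ∃ m : M, ∀ n ∈ N, σ • f (σ⁻¹ * n * σ) - f n = n • m - m) ∧
    -- surjectivity onto the `G/N`-invariants: every `G/N`-invariant class on `N`
    -- extends (up to coboundary) to a cocycle on `G`
    (∀ c : N → M, (∀ n n' : N, c (n * n') = c n + (n : G) • c n') →
      (∀ σ : G, ∃ m : M, ∀ n : N,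
        σ • c ⟨σ⁻¹ * n * σ, by simpa using hN.conj_mem n n.2 σ⁻¹⟩ - c n = (n : G) • m - m) →
      ∃ f : G → M, IsOneCocycle f ∧ ∃ m : M, ∀ n : N, f n - c n = (n : G) • m - m) := by
  -- uniqueness of the "coboundary witness"
  have uniq : ∀ m m' : M, (∀ n ∈ N, n • m - m = n • m' - m') → m = m' := by
    intro m m' h
    have h0 : m - m' = 0 := by
      apply hfix
      intro n hn
      have h1 := h n hn
      have h2 : n • m = n • m' - m' + m := by rw [← h1]; abel
      rw [smul_sub, h2]; abel
    exact sub_eq_zero.mp h0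
  refine ⟨?_, ?_, ?_⟩
  · -- injectivity
    rintro f f' hf hf' ⟨m, hm⟩
    refine ⟨m, fun g => ?_⟩
    set d : G → M := fun g => f g - f' g - (g • m - m) with hd
    have hdcoc : ∀ g h : G, d (g * h) = d g + g • d h := by
      intro g h
      simp only [hd, hf g h, hf' g h, mul_smul, smul_sub, smul_add]
      abel
    have hdN : ∀ n ∈ N, d n = 0 := by
      intro n hn
      simp only [hd, hm n hn, sub_self]
    have hfixg : ∀ n' ∈ N, n' • d g = d g := by
      intro n' hn'
      have hn : g⁻¹ * n' * g ∈ N := by simpa using hN.conj_mem n' hn' g⁻¹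
      have e1 : d (g * (g⁻¹ * n' * g)) = d g := by
        rw [hdcoc, hdN _ hn, smul_zero, add_zero]
      have e2 : g * (g⁻¹ * n' * g) = n' * g := by group
      rw [e2, hdcoc, hdN n' hn', zero_add] at e1
      exact e1
    have hdg : d g = 0 := hfix _ hfixg
    exact sub_eq_zero.mp hdg
  · -- image in the invariants
    intro f hf σ
    have h1 : f 1 = 0 := by
      have := hf 1 1
      simpa using this
    have hinv : σ • f σ⁻¹ = - f σ := by
      have h2 := hf σ σ⁻¹
      rw [mul_inv_cancel, h1] at h2
      exact eq_neg_of_add_eq_zero_right h2.symm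
    refine ⟨f σ, fun n hn => ?_⟩
    have h3 : f (σ⁻¹ * (n * σ)) = f σ⁻¹ + σ⁻¹ • (f n + n • f σ) := by
      rw [hf, hf]
    rw [mul_assoc, h3, smul_add, smul_inv_smul, hinv]
    abel
  · -- surjectivity onto invariants
    intro c hc hcinv
    set conj : G → N → N := fun σ n => ⟨σ⁻¹ * n * σ, by simpa using hN.conj_mem n n.2 σ⁻¹⟩
      with hconj
    set f : G → M := fun σ => Classical.choose (hcinv σ) with hfdef
    have hfspec : ∀ σ : G, ∀ n : N, σ • c (conj σ n) - c n = (n : G) • f σ - f σ :=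
      fun σ n => Classical.choose_spec (hcinv σ) n
    have funiq : ∀ (σ : G) (m : M),
        (∀ n : N, σ • c (conj σ n) - c n = (n : G) • m - m) → f σ = m := by
      intro σ m hm
      apply uniq
      intro n hn
      exact (hfspec σ ⟨n, hn⟩).symm.trans (hm ⟨n, hn⟩)
    have hfcoc : IsOneCocycle f := by
      intro σ τ
      apply funiq
      intro n
      set n' : N := conj σ n with hn'
      have e0 : conj (σ * τ) n = conj τ n' := by
        apply Subtype.ext
        show (σ * τ)⁻¹ * n * (σ * τ) = τ⁻¹ * (σ⁻¹ * n * σ) * τ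
        group
      have hτ' : τ • c (conj τ n') = c n' + ((n' : G) • f τ - f τ) := by
        rw [← hfspec τ n']; abel
      have hσ' : σ • c n' = c n + ((n : G) • f σ - f σ) := by
        rw [← hfspec σ n]; abel
      have hmix : σ • ((n' : G) • f τ) = (n : G) • (σ • f τ) := by
        rw [smul_smul, smul_smul]
        congr 1
        show σ * (σ⁻¹ * n * σ) = (n : G) * σ
        group
      calc (σ * τ) • c (conj (σ * τ) n) - c n
          = σ • (τ • c (conj τ n')) - c n := by rw [mul_smul, e0]
        _ = σ • c n' + σ • ((n' : G) • f τ) - σ • f τ - c n := by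
            rw [hτ', smul_add, smul_sub]; abel
        _ = (n : G) • (f σ + σ • f τ) - (f σ + σ • f τ) := by
            rw [hσ', hmix, smul_add]; abel
    have hfN : ∀ n₀ : N, f n₀ = c n₀ := by
      intro n₀
      apply funiq
      intro n
      set a : N := conj (↑n₀) n with ha
      have e : n₀ * a = n * n₀ := by
        apply Subtype.ext
        show (n₀ : G) * ((n₀ : G)⁻¹ * n * n₀) = (n : G) * n₀
        group
      have h1 : c n₀ + (n₀ : G) • c a = c n + (n : G) • c n₀ := by
        rw [← hc n₀ a, e, hc n n₀]
      have h2 : (n₀ : G) • c a = c n + (n : G) • c n₀ - c n₀ := by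
        rw [← h1]; abel
      rw [h2]; abel
    exact ⟨f, hfcoc, 0, fun n => by simp [hfN n]⟩
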